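/- Let ρ_AB be a separable bipartite state on ℂ^{d_A} ⊗ ℂ^{d_B}, let {M^A_α}_{α=1}^{d_A²} be a GSIC-POVM on ℂ^{d_A} with parameter a_A and {M^B_β}_{β=1}^{d_B²} a GSIC-POVM on ℂ^{d_B} with parameter a_B, and let G(ρ_AB) be the d_A²×d_B² matrix with entries tr((M^A_α ⊗ M^B_β) ρ_AB). Then ‖G(ρ_AB)‖_tr ≤ √((a_A d_A² + 1)/(d_A(d_A+1))) · √((a_B d_B² + 1)/(d_B(d_B+1))). -/

import Mathlib

open scoped BigOperators ComplexOrder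
open Matrix

noncomputable def traceNorm {m n : Type*} [Fintype m] [Fintype n] [DecidableEq n]
    (X : Matrix m n ℂ) : ℝ :=
  ((Matrix.posSemidef_conjTranspose_mul_self X).1.eigenvectorUnitary.1 *
    diagonal (((↑) : ℝ → ℂ) ∘ Real.sqrt ∘ (Matrix.posSemidef_conjTranspose_mul_self X).1.eigenvalues) *
    (star (Matrix.posSemidef_conjTranspose_mul_self X).1.eigenvectorUnitary : Matrix n n ℂ)).trace.re

def IsDensityMatrix {ι : Type*} [Fintype ι] (ρ : Matrix ι ι ℂ) : Prop :=
  ρ.PosSemidef ∧ ρ.trace = 1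

def IsNMPOVM (d N M : ℕ) (x : ℝ)
    (E : Fin N → Fin M → Matrix (Fin d) (Fin d) ℂ) : Prop :=
  (∀ α k, (E α k).PosSemidef) ∧
  (∀ α, ∑ k, E α k = 1) ∧
  (∀ α k, (E α k).trace = (((d : ℝ) / M : ℝ) : ℂ)) ∧
  (∀ α k, (E α k * E α k).trace = (x : ℂ)) ∧
  (∀ α k l, k ≠ l → (E α k * E α l).trace =
      ((((d : ℝ) - M * x) / (M * ((M : ℝ) - 1)) : ℝ) : ℂ)) ∧
  (∀ α β k l, α ≠ β → (E α k * E β l).trace = (((d : ℝ) / M ^ 2 : ℝ) : ℂ)) ∧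
  ((d : ℝ) / M ^ 2 < x ∧ x ≤ min ((d : ℝ) ^ 2 / M ^ 2) ((d : ℝ) / M))

def IsInfoComplete (d N M : ℕ) : Prop := ((M : ℝ) - 1) * N = (d : ℝ) ^ 2 - 1
open Kronecker

/-- Partial trace over the second factor. -/
noncomputable def ptraceB {dA dB : ℕ} (ρ : Matrix (Fin dA × Fin dB) (Fin dA × Fin dB) ℂ) :
    Matrix (Fin dA) (Fin dA) ℂ :=
  Matrix.of fun i j => ∑ k, ρ (i, k) (j, k)

/-- Partial trace over the first factor. -/
noncomputable def ptraceA {dA dB : ℕ} (ρ : Matrix (Fin dA × Fin dB) (Fin dA × Fin dB) ℂ) :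
    Matrix (Fin dB) (Fin dB) ℂ :=
  Matrix.of fun i j => ∑ k, ρ (k, i) (k, j)

/-- A bipartite state is separable if it is a finite convex combination of
tensor products of local density matrices. -/
def SeparableState {dA dB : ℕ} (ρ : Matrix (Fin dA × Fin dB) (Fin dA × Fin dB) ℂ) : Prop :=
  ∃ (K : ℕ) (p : Fin K → ℝ) (ρA : Fin K → Matrix (Fin dA) (Fin dA) ℂ)
    (ρB : Fin K → Matrix (Fin dB) (Fin dB) ℂ),
    (∀ i, 0 ≤ p i) ∧ (∑ i, p i = 1) ∧
    (∀ i, IsDensityMatrix (ρA i)) ∧ (∀ i, IsDensityMatrix (ρB i)) ∧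
    ρ = ∑ i, (p i : ℂ) • (ρA i ⊗ₖ ρB i)
/-- A general symmetric informationally complete POVM (GSIC-POVM) on ℂ^d with
parameter a. -/
def IsGSICPOVM (d : ℕ) (a : ℝ) (Ms : Fin (d ^ 2) → Matrix (Fin d) (Fin d) ℂ) : Prop :=
  (∀ α, (Ms α).PosSemidef) ∧ (∑ α, Ms α = 1) ∧
  (∀ α, (Ms α * Ms α).trace = (a : ℂ)) ∧
  (∀ α β, α ≠ β → (Ms α * Ms β).trace =
      (((1 - (d : ℝ) * a) / ((d : ℝ) * ((d : ℝ) ^ 2 - 1)) : ℝ) : ℂ)) ∧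
  (1 / (d : ℝ) ^ 3 < a ∧ a ≤ 1 / (d : ℝ) ^ 2)

section Helpers

variable {m n k : Type*} [Fintype m] [Fintype n] [Fintype k]

lemma trace_re_nonneg_of_psd [DecidableEq n] {A : Matrix n n ℂ} (hA : A.PosSemidef) :
    0 ≤ A.trace.re := by
  have h : ∀ i, 0 ≤ (A i i).re := by
    intro i
    exact (Complex.le_def.mp (hA.diag_nonneg (i := i))).1
  rw [Matrix.trace]
  simpa [Matrix.diag] using Finset.sum_nonneg fun i _ => h i

lemma trace_mul_psd_re_nonneg [DecidableEq n] {S T : Matrix n n ℂ}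
    (hS : S.PosSemidef) (hT : T.PosSemidef) : 0 ≤ ((S * T).trace).re := by
  obtain ⟨B, hB⟩ : ∃ B : Matrix n n ℂ, T = Bᴴ * B := by
    open scoped MatrixOrder Matrix.Norms.L2Operator in
    exact CStarAlgebra.nonneg_iff_eq_star_mul_self.mp hT.nonneg
  have : (S * T).trace = (B * S * Bᴴ).trace := by
    rw [hB, ← Matrix.mul_assoc, Matrix.trace_mul_cycle]
  rw [this]
  exact trace_re_nonneg_of_psd (hS.mul_mul_conjTranspose_same B)

lemma trace_mul_hermitian_real {X Y : Matrix n n ℂ} (hX : X.IsHermitian) (hY : Y.IsHermitian) :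
    ((X * Y).trace).im = 0 := by
  have h : (starRingEnd ℂ) ((X * Y).trace) = (X * Y).trace := by
    calc (starRingEnd ℂ) ((X * Y).trace) = ((X * Y)ᴴ).trace := by
          rw [Matrix.trace_conjTranspose]; rfl
      _ = (Yᴴ * Xᴴ).trace := by rw [Matrix.conjTranspose_mul]
      _ = (Y * X).trace := by rw [hX.eq, hY.eq]
      _ = (X * Y).trace := Matrix.trace_mul_comm Y X
  exact Complex.conj_eq_iff_im.mp h

lemma trace_conjTranspose_mul_self_eq (X : Matrix m n ℂ) :
    (Xᴴ * X).trace = ((∑ i, ∑ j, ‖X i j‖ ^ 2 : ℝ) : ℂ) := by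
  rw [Matrix.trace]
  push_cast
  rw [Finset.sum_comm]
  congr 1; ext j
  simp only [Matrix.diag_apply, Matrix.mul_apply, Matrix.conjTranspose_apply]
  congr 1; ext i
  simp [Complex.star_def, Complex.conj_mul']

end Helpers

section TN

variable {m n k : Type*} [Fintype m] [Fintype n] [Fintype k] [DecidableEq n]

lemma traceNorm_eq_sum_sqrt (M : Matrix m n ℂ) :
    traceNorm M = ∑ i, Real.sqrt ((Matrix.posSemidef_conjTranspose_mul_self M).1.eigenvalues i) := by
  set hH := Matrix.posSemidef_conjTranspose_mul_self M
  have hUU : star (hH.1.eigenvectorUnitary : Matrix n n ℂ) * hH.1.eigenvectorUnitary = 1 :=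
    Matrix.mem_unitaryGroup_iff'.mp hH.1.eigenvectorUnitary.2
  unfold traceNorm
  rw [Matrix.trace_mul_cycle, hUU, Matrix.one_mul]
  simp [Matrix.trace_diagonal]

lemma traceNorm_mul_le (A : Matrix m k ℂ) (B : Matrix k n ℂ) :
    traceNorm (A * B) ≤
      Real.sqrt (∑ i, ∑ j, ‖A i j‖ ^ 2) * Real.sqrt (∑ i, ∑ j, ‖B i j‖ ^ 2) := by
  classical
  set M := A * B with hMdef
  set hH := Matrix.posSemidef_conjTranspose_mul_self M with hHdef
  set U : Matrix n n ℂ := (hH.1.eigenvectorUnitary : Matrix n n ℂ) with hUdef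
  set lam : n → ℝ := hH.1.eigenvalues with hlamdef
  have hlam0 : ∀ i, 0 ≤ lam i := hH.eigenvalues_nonneg
  have hUU : star U * U = 1 := Matrix.mem_unitaryGroup_iff'.mp hH.1.eigenvectorUnitary.2
  have hUU' : U * star U = 1 := Matrix.mem_unitaryGroup_iff.mp hH.1.eigenvectorUnitary.2
  have hdiag : star U * (Mᴴ * M) * U = diagonal (Complex.ofReal ∘ lam) :=
    by have := hH.1.conjStarAlgAut_star_eigenvectorUnitary
       rwa [Unitary.conjStarAlgAut_star_apply] at this
  set g : n → ℝ := fun i => if 0 < lam i then 1 / Real.sqrt (lam i) else 0 with hgdef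
  set Dg : Matrix n n ℂ := diagonal (fun i => (g i : ℂ)) with hDgdef
  have hDgH : Dgᴴ = Dg := by
    rw [hDgdef, Matrix.diagonal_conjTranspose]
    congr 1
    simp [Pi.star_def, Complex.conj_ofReal]
  set F : Matrix m n ℂ := M * U * Dg with hFdef
  have hFH : Fᴴ = Dg * (star U * Mᴴ) := by
    simp only [hFdef, Matrix.conjTranspose_mul, hDgH, Matrix.star_eq_conjTranspose,
      Matrix.mul_assoc]
  have hdiag' : (star U * Mᴴ) * (M * U) = diagonal (Complex.ofReal ∘ lam) := by
    rw [← hdiag]; simp only [Matrix.mul_assoc]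
  have hFMU : Fᴴ * (M * U) = Dg * diagonal (Complex.ofReal ∘ lam) := by
    rw [hFH, Matrix.mul_assoc, hdiag']
  have hglam : ∀ i, g i * lam i = Real.sqrt (lam i) := by
    intro i
    rw [hgdef]
    by_cases h : 0 < lam i
    · simp only [if_pos h]
      rw [one_div, inv_mul_eq_div, Real.div_sqrt]
    · simp only [if_neg h]
      have : lam i = 0 := le_antisymm (not_lt.mp h) (hlam0 i)
      simp [this]
  set X : Matrix k n ℂ := Aᴴ * F with hXdef
  set Y : Matrix k n ℂ := B * U with hYdef
  have hXY : Xᴴ * Y = Fᴴ * (M * U) := by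
    simp only [hXdef, Matrix.conjTranspose_mul, Matrix.conjTranspose_conjTranspose, hYdef,
      hMdef, Matrix.mul_assoc]
  have main1 : traceNorm M = ((Xᴴ * Y).trace).re := by
    rw [traceNorm_eq_sum_sqrt, hXY, hFMU, hDgdef, Matrix.diagonal_mul_diagonal,
      Matrix.trace_diagonal, Complex.re_sum]
    refine Finset.sum_congr rfl fun i _ => ?_
    show Real.sqrt (lam i) = ((g i : ℂ) * (Complex.ofReal ∘ lam) i).re
    simp only [Function.comp_apply]
    rw [← Complex.ofReal_mul, Complex.ofReal_re, hglam i]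
  -- Cauchy-Schwarz step
  have main2 : ((Xᴴ * Y).trace).re ≤
      Real.sqrt (∑ p, ∑ q, ‖X p q‖ ^ 2) * Real.sqrt (∑ p, ∑ q, ‖Y p q‖ ^ 2) := by
    have h1 : ((Xᴴ * Y).trace).re = ∑ j, ∑ p, ((starRingEnd ℂ) (X p j) * Y p j).re := by
      rw [Matrix.trace, Complex.re_sum]
      refine Finset.sum_congr rfl fun j _ => ?_
      rw [Matrix.diag_apply, Matrix.mul_apply, Complex.re_sum]
      refine Finset.sum_congr rfl fun p _ => ?_
      rw [Matrix.conjTranspose_apply]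
      rfl
    have h2 : ∀ j p, ((starRingEnd ℂ) (X p j) * Y p j).re ≤ ‖X p j‖ * ‖Y p j‖ := by
      intro j p
      calc ((starRingEnd ℂ) (X p j) * Y p j).re ≤ ‖(starRingEnd ℂ) (X p j) * Y p j‖ :=
            Complex.re_le_norm _
        _ = ‖X p j‖ * ‖Y p j‖ := by rw [norm_mul, RCLike.norm_conj]
    have h3 : ((Xᴴ * Y).trace).re ≤ ∑ j, ∑ p, ‖X p j‖ * ‖Y p j‖ := by
      rw [h1]
      exact Finset.sum_le_sum fun j _ => Finset.sum_le_sum fun p _ => h2 j p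
    have h4 : (∑ j, ∑ p, ‖X p j‖ * ‖Y p j‖) ≤
        Real.sqrt (∑ p, ∑ q, ‖X p q‖ ^ 2) * Real.sqrt (∑ p, ∑ q, ‖Y p q‖ ^ 2) := by
      have hcs := Finset.sum_mul_sq_le_sq_mul_sq (Finset.univ : Finset (n × k))
        (fun pq => ‖X pq.2 pq.1‖) (fun pq => ‖Y pq.2 pq.1‖)
      have hflat : (∑ j, ∑ p, ‖X p j‖ * ‖Y p j‖) =
          ∑ pq : n × k, ‖X pq.2 pq.1‖ * ‖Y pq.2 pq.1‖ := by
        rw [← Finset.sum_product']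
        rfl
      have hflatX : (∑ p, ∑ q, ‖X p q‖ ^ 2) = ∑ pq : n × k, ‖X pq.2 pq.1‖ ^ 2 := by
        rw [Finset.sum_comm, ← Finset.sum_product']
        rfl
      have hflatY : (∑ p, ∑ q, ‖Y p q‖ ^ 2) = ∑ pq : n × k, ‖Y pq.2 pq.1‖ ^ 2 := by
        rw [Finset.sum_comm, ← Finset.sum_product']
        rfl
      rw [hflat, hflatX, hflatY]
      have hnn : 0 ≤ ∑ pq : n × k, ‖X pq.2 pq.1‖ * ‖Y pq.2 pq.1‖ :=
        Finset.sum_nonneg fun pq _ => mul_nonneg (norm_nonneg _) (norm_nonneg _)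
      have := Real.sqrt_le_sqrt hcs
      rw [Real.sqrt_sq hnn] at this
      rwa [Real.sqrt_mul (Finset.sum_nonneg fun pq _ => sq_nonneg _)] at this
    exact h3.trans h4
  have main3 : (∑ p, ∑ q, ‖Y p q‖ ^ 2) = ∑ i, ∑ j, ‖B i j‖ ^ 2 := by
    have h1 : (Yᴴ * Y).trace = (Bᴴ * B).trace := by
      have h0 : Yᴴ * Y = star U * (Bᴴ * B) * U := by
        simp only [hYdef, Matrix.conjTranspose_mul, Matrix.star_eq_conjTranspose,
          Matrix.mul_assoc]
      rw [h0, Matrix.trace_mul_cycle, ← Matrix.mul_assoc, hUU', Matrix.one_mul]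
    rw [trace_conjTranspose_mul_self_eq Y, trace_conjTranspose_mul_self_eq B] at h1
    exact_mod_cast h1
  have hFF : Fᴴ * F = diagonal (fun i => ((g i ^ 2 * lam i : ℝ) : ℂ)) := by
    calc Fᴴ * F = Dg * ((star U * Mᴴ) * (M * U)) * Dg := by
          rw [hFH, hFdef]; simp only [Matrix.mul_assoc]
      _ = Dg * diagonal (Complex.ofReal ∘ lam) * Dg := by rw [hdiag']
      _ = diagonal (fun i => ((g i ^ 2 * lam i : ℝ) : ℂ)) := by
          rw [hDgdef, Matrix.diagonal_mul_diagonal, Matrix.diagonal_mul_diagonal]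
          refine congrArg Matrix.diagonal (funext fun i => ?_)
          simp only [Function.comp_apply]
          push_cast
          ring
  have hge : ∀ i, (g i : ℂ) * ((g i ^ 2 * lam i : ℝ) : ℂ) = (g i : ℂ) := by
    intro i
    by_cases h : 0 < lam i
    · have : g i ^ 2 * lam i = 1 := by
        rw [hgdef]
        simp only [if_pos h]
        rw [div_pow, one_pow, Real.sq_sqrt (hlam0 i)]
        field_simp
      rw [this]
      simp
    · have h0 : g i = 0 := by rw [hgdef]; simp [if_neg h]
      simp [h0]
  set P : Matrix m m ℂ := F * Fᴴ with hPdef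
  have hPH : Pᴴ = P := by
    rw [hPdef, Matrix.conjTranspose_mul, Matrix.conjTranspose_conjTranspose]
  have hDgE : Dg * diagonal (fun i => ((g i ^ 2 * lam i : ℝ) : ℂ)) = Dg := by
    rw [hDgdef, Matrix.diagonal_mul_diagonal]
    exact congrArg Matrix.diagonal (funext fun i => hge i)
  have hFe : F * diagonal (fun i => ((g i ^ 2 * lam i : ℝ) : ℂ)) = F := by
    conv_lhs => rw [hFdef, Matrix.mul_assoc, hDgE]
  have hPP : P * P = P := by
    calc P * P = F * (Fᴴ * F) * Fᴴ := by rw [hPdef]; simp only [Matrix.mul_assoc]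
      _ = F * Fᴴ := by rw [hFF, hFe]
  have h1P : (1 - P).PosSemidef := by
    have h2 : (1 - P)ᴴ * (1 - P) = 1 - P := by
      rw [Matrix.conjTranspose_sub, Matrix.conjTranspose_one, hPH]
      have h3 : (1 - P) * (1 - P) = 1 - P - P + P * P := by noncomm_ring
      rw [h3, hPP]
      abel
    have h4 := Matrix.posSemidef_conjTranspose_mul_self (1 - P)
    rwa [h2] at h4
  have main4 : (∑ p, ∑ q, ‖X p q‖ ^ 2) ≤ ∑ i, ∑ j, ‖A i j‖ ^ 2 := by
    have hX1 : (Xᴴ * X).trace = ((A * Aᴴ) * P).trace := by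
      have h0 : Xᴴ * X = Fᴴ * ((A * Aᴴ) * F) := by
        simp only [hXdef, Matrix.conjTranspose_mul, Matrix.conjTranspose_conjTranspose,
          Matrix.mul_assoc]
      rw [h0, Matrix.trace_mul_comm, hPdef]
      simp only [Matrix.mul_assoc]
    have hpos : 0 ≤ (((A * Aᴴ) * (1 - P)).trace).re :=
      trace_mul_psd_re_nonneg (Matrix.posSemidef_self_mul_conjTranspose A) h1P
    have hexp : ((A * Aᴴ) * (1 - P)).trace = (A * Aᴴ).trace - ((A * Aᴴ) * P).trace := by
      rw [Matrix.mul_sub, Matrix.mul_one, Matrix.trace_sub]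
    have e1 : (∑ p, ∑ q, ‖X p q‖ ^ 2) = ((Xᴴ * X).trace).re := by
      rw [trace_conjTranspose_mul_self_eq]; norm_cast
    have e2 : (∑ i, ∑ j, ‖A i j‖ ^ 2) = ((Aᴴ * A).trace).re := by
      rw [trace_conjTranspose_mul_self_eq]; norm_cast
    have e3 : ((Aᴴ * A).trace).re = ((A * Aᴴ).trace).re := by rw [Matrix.trace_mul_comm]
    rw [e1, e2, hX1, e3]
    rw [hexp, Complex.sub_re] at hpos
    linarith
  rw [main1]
  refine main2.trans ?_
  have h5 : Real.sqrt (∑ p, ∑ q, ‖X p q‖ ^ 2) ≤ Real.sqrt (∑ i, ∑ j, ‖A i j‖ ^ 2) :=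
    Real.sqrt_le_sqrt main4
  have h6 : Real.sqrt (∑ p, ∑ q, ‖Y p q‖ ^ 2) = Real.sqrt (∑ i, ∑ j, ‖B i j‖ ^ 2) := by
    rw [main3]
  rw [← h6]
  exact mul_le_mul_of_nonneg_right h5 (Real.sqrt_nonneg _)

end TN

section Purity

variable {n : Type*} [Fintype n] [DecidableEq n]

lemma trace_diag_form {σ : Matrix n n ℂ} (h : σ.IsHermitian) :
    σ.trace = ∑ i, ((h.eigenvalues i : ℝ) : ℂ) := by
  have hUU' : star (h.eigenvectorUnitary : Matrix n n ℂ) * (h.eigenvectorUnitary : Matrix n n ℂ)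
      = 1 := Matrix.mem_unitaryGroup_iff'.mp h.eigenvectorUnitary.2
  conv_lhs => rw [h.spectral_theorem, Unitary.conjStarAlgAut_apply]
  rw [Matrix.trace_mul_cycle, hUU', Matrix.one_mul, Matrix.trace_diagonal]
  rfl

lemma trace_sq_re_le_one {σ : Matrix n n ℂ} (hσ : IsDensityMatrix σ) :
    ((σ * σ).trace).re ≤ 1 := by
  have h : σ.IsHermitian := hσ.1.1
  set U : Matrix n n ℂ := (h.eigenvectorUnitary : Matrix n n ℂ) with hUdef
  have hUU : star U * U = 1 := Matrix.mem_unitaryGroup_iff'.mp h.eigenvectorUnitary.2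
  have hUU' : U * star U = 1 := Matrix.mem_unitaryGroup_iff.mp h.eigenvectorUnitary.2
  have hD : star U * σ * U = diagonal (Complex.ofReal ∘ h.eigenvalues) :=
    by have := h.conjStarAlgAut_star_eigenvectorUnitary
       rwa [Unitary.conjStarAlgAut_star_apply] at this
  have h2 : (star U * σ * U) * (star U * σ * U) = star U * (σ * σ) * U := by
    calc (star U * σ * U) * (star U * σ * U)
        = star U * σ * (U * star U) * σ * U := by simp only [Matrix.mul_assoc]
      _ = star U * (σ * σ) * U := by rw [hUU']; simp only [Matrix.mul_one, Matrix.mul_assoc]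
  have h3 : (σ * σ).trace = ∑ i, ((h.eigenvalues i : ℝ) : ℂ) ^ 2 := by
    have h4 : (star U * (σ * σ) * U).trace = (σ * σ).trace := by
      rw [Matrix.trace_mul_cycle, ← Matrix.mul_assoc, hUU', Matrix.one_mul]
    rw [← h4, ← h2, hD, Matrix.diagonal_mul_diagonal, Matrix.trace_diagonal]
    simp [pow_two]
  have htr : ∑ i, h.eigenvalues i = 1 := by
    have := trace_diag_form h
    rw [hσ.2] at this
    have h5 : ((1 : ℝ) : ℂ) = ((∑ i, h.eigenvalues i : ℝ) : ℂ) := by push_cast [this]; norm_num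
    exact_mod_cast h5.symm
  have hnn : ∀ i ∈ Finset.univ, 0 ≤ h.eigenvalues i := fun i _ => hσ.1.eigenvalues_nonneg i
  have h6 : ((σ * σ).trace).re = ∑ i, h.eigenvalues i ^ 2 := by
    rw [h3, Complex.re_sum]
    refine Finset.sum_congr rfl fun i _ => ?_
    rw [← Complex.ofReal_pow, Complex.ofReal_re]
  rw [h6]
  calc ∑ i, h.eigenvalues i ^ 2 ≤ (∑ i, h.eigenvalues i) ^ 2 :=
        Finset.sum_sq_le_sq_sum_of_nonneg hnn
    _ = 1 := by rw [htr]; norm_num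

end Purity

lemma gsic_sum_sq_le {d : ℕ} {a : ℝ} {Ms : Fin (d ^ 2) → Matrix (Fin d) (Fin d) ℂ}
    (hM : IsGSICPOVM d a Ms) {σ : Matrix (Fin d) (Fin d) ℂ} (hσ : IsDensityMatrix σ) :
    ∑ α, ‖(Ms α * σ).trace‖ ^ 2 ≤ (a * (d : ℝ) ^ 2 + 1) / ((d : ℝ) * ((d : ℝ) + 1)) := by
  classical
  obtain ⟨hpsd, hsum, htr2, htrod, hlt, hle⟩ := hM
  have hd2 : 2 ≤ d := by
    by_contra hcon
    push_neg at hcon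
    interval_cases d
    · norm_num at hlt hle; linarith
    · norm_num at hlt hle; linarith
  have hdR : (2 : ℝ) ≤ (d : ℝ) := by exact_mod_cast hd2
  have hd0 : (0 : ℝ) < (d : ℝ) := by linarith
  have hd1 : (0 : ℝ) < (d : ℝ) ^ 2 - 1 := by nlinarith
  obtain ⟨c, hcdef⟩ : ∃ c : ℝ, c = (1 - (d : ℝ) * a) / ((d : ℝ) * ((d : ℝ) ^ 2 - 1)) :=
    ⟨_, rfl⟩
  have hden : (0 : ℝ) < (d : ℝ) * ((d : ℝ) ^ 2 - 1) := by positivity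
  have had3 : 1 < a * (d : ℝ) ^ 3 := by
    rw [div_lt_iff₀ (by positivity)] at hlt
    nlinarith
  have hda : (d : ℝ) * a ≤ 1 := by
    rw [le_div_iff₀ (by positivity)] at hle
    nlinarith
  have hc0 : 0 ≤ c := by
    rw [hcdef]
    apply div_nonneg _ (le_of_lt hden)
    linarith
  have hcden : c * ((d : ℝ) * ((d : ℝ) ^ 2 - 1)) = 1 - (d : ℝ) * a := by
    rw [hcdef]; field_simp
  have hacden : (a - c) * ((d : ℝ) * ((d : ℝ) ^ 2 - 1)) = a * (d : ℝ) ^ 3 - 1 := by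
    rw [sub_mul, hcden]; ring
  have hacpos : 0 < a - c := by nlinarith [hacden, had3, hden]
  obtain ⟨t, htdef⟩ : ∃ t : Fin (d ^ 2) → ℝ, t = fun α => ((Ms α * σ).trace).re := ⟨_, rfl⟩
  have him : ∀ α, ((Ms α * σ).trace).im = 0 :=
    fun α => trace_mul_hermitian_real (hpsd α).1 hσ.1.1
  have htc : ∀ α, (Ms α * σ).trace = ((t α : ℝ) : ℂ) := by
    intro α
    apply Complex.ext
    · rw [htdef]; simp
    · rw [him α]; simp
  have hsum_t : ∑ α, t α = 1 := by
    have h1 : ∑ α, (Ms α * σ).trace = (1 : ℂ) := by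
      rw [← Matrix.trace_sum, ← Matrix.sum_mul, hsum, Matrix.one_mul, hσ.2]
    rw [Finset.sum_congr rfl (fun α _ => htc α)] at h1
    exact_mod_cast h1
  obtain ⟨w, hwdef⟩ : ∃ w : Fin (d ^ 2) → ℝ, w = fun α => (t α - c * d) / (a - c) := ⟨_, rfl⟩
  have htw : ∀ α, t α = (a - c) * w α + c * d := by
    intro α
    rw [hwdef]
    field_simp
    ring
  obtain ⟨N, hNdef⟩ : ∃ N : Matrix (Fin d) (Fin d) ℂ, N = ∑ α, (w α : ℂ) • Ms α := ⟨_, rfl⟩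
  have hNH : N.IsHermitian := by
    rw [hNdef, Matrix.IsHermitian, Matrix.conjTranspose_sum]
    refine Finset.sum_congr rfl fun α _ => ?_
    rw [Matrix.conjTranspose_smul, (hpsd α).1.eq, Complex.star_def, Complex.conj_ofReal]
  have hT : ∀ α β, (Ms α * Ms β).trace
      = ((c : ℝ) : ℂ) + if α = β then ((a - c : ℝ) : ℂ) else 0 := by
    intro α β
    by_cases h : α = β
    · subst h
      rw [htr2 α, if_pos rfl]
      push_cast
      ring
    · rw [htrod α β h, if_neg h, add_zero, hcdef]
  have htrNN : (N * N).trace =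
      (((a - c) * (∑ α, w α ^ 2) + c * (∑ α, w α) ^ 2 : ℝ) : ℂ) := by
    have h1 : N * N = ∑ α, ∑ β, ((w α : ℂ) * (w β : ℂ)) • (Ms α * Ms β) := by
      rw [hNdef, Finset.sum_mul_sum]
      refine Finset.sum_congr rfl fun α _ => Finset.sum_congr rfl fun β _ => ?_
      rw [Matrix.smul_mul, Matrix.mul_smul, smul_smul]
    rw [h1, Matrix.trace_sum]
    have h2 : ∀ α, (∑ β, ((w α : ℂ) * (w β : ℂ)) • (Ms α * Ms β)).trace
        = (∑ β, (w α : ℂ) * (w β : ℂ)) * ((c : ℝ) : ℂ)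
          + ((w α : ℂ)) ^ 2 * ((a - c : ℝ) : ℂ) := by
      intro α
      rw [Matrix.trace_sum]
      have h3 : ∀ β, (((w α : ℂ) * (w β : ℂ)) • (Ms α * Ms β)).trace
          = (w α : ℂ) * (w β : ℂ) * ((c : ℝ) : ℂ)
            + (w α : ℂ) * (w β : ℂ) * (if α = β then ((a - c : ℝ) : ℂ) else 0) := by
        intro β
        rw [Matrix.trace_smul, smul_eq_mul, hT α β]
        ring
      rw [Finset.sum_congr rfl (fun β _ => h3 β), Finset.sum_add_distrib, ← Finset.sum_mul]
      congr 1
      rw [Finset.sum_eq_single α]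
      · rw [if_pos rfl]; ring
      · intro β _ hβ
        rw [if_neg (Ne.symm hβ), mul_zero]
      · intro h; exact absurd (Finset.mem_univ α) h
    rw [Finset.sum_congr rfl (fun α _ => h2 α), Finset.sum_add_distrib]
    have hcast1 : ∀ α : Fin (d ^ 2), (∑ β, (w α : ℂ) * (w β : ℂ)) * ((c : ℝ) : ℂ)
        = (w α : ℂ) * ((∑ β, w β : ℝ) : ℂ) * ((c : ℝ) : ℂ) := by
      intro α
      rw [← Finset.mul_sum]
      push_cast
      ring
    rw [Finset.sum_congr rfl (fun α _ => hcast1 α)]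
    rw [← Finset.sum_mul, ← Finset.sum_mul, ← Finset.sum_mul]
    push_cast
    ring
  have htrσN : (σ * N).trace = ((∑ α, w α * t α : ℝ) : ℂ) := by
    rw [hNdef, Matrix.mul_sum, Matrix.trace_sum]
    have h1 : ∀ α : Fin (d ^ 2), (σ * ((w α : ℂ) • Ms α)).trace = ((w α * t α : ℝ) : ℂ) := by
      intro α
      rw [Matrix.mul_smul, Matrix.trace_smul, smul_eq_mul, Matrix.trace_mul_comm, htc α]
      push_cast
      ring
    rw [Finset.sum_congr rfl (fun α _ => h1 α)]
    push_cast
    ring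
  have htrNσ : (N * σ).trace = ((∑ α, w α * t α : ℝ) : ℂ) := by
    rw [Matrix.trace_mul_comm, htrσN]
  have hherm : (σ - N).IsHermitian := hσ.1.1.sub hNH
  have hpos : 0 ≤ (((σ - N) * (σ - N)).trace).re := by
    have h1 : (σ - N)ᴴ * (σ - N) = (σ - N) * (σ - N) := by rw [hherm.eq]
    have h2 := Matrix.posSemidef_conjTranspose_mul_self (σ - N)
    rw [h1] at h2
    exact trace_re_nonneg_of_psd h2
  have hexp : (((σ - N) * (σ - N)).trace) =
      (σ * σ).trace - (σ * N).trace - (N * σ).trace + (N * N).trace := by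
    rw [Matrix.sub_mul, Matrix.mul_sub, Matrix.mul_sub, Matrix.trace_sub, Matrix.trace_sub,
      Matrix.trace_sub]
    ring
  have hreal : 0 ≤ ((σ * σ).trace).re - (∑ α, w α * t α) - (∑ α, w α * t α)
      + ((a - c) * (∑ α, w α ^ 2) + c * (∑ α, w α) ^ 2) := by
    have h0 := hpos
    rw [hexp, htrσN, htrNσ, htrNN] at h0
    simp only [Complex.add_re, Complex.sub_re, Complex.ofReal_re] at h0
    linarith
  have hts1 : ((σ * σ).trace).re ≤ 1 := trace_sq_re_le_one hσ
  have hcard : (Finset.univ : Finset (Fin (d ^ 2))).card = d ^ 2 := by simp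
  have hsumtw : (1 : ℝ) = (a - c) * (∑ α, w α) + c * (d : ℝ) * (d : ℝ) ^ 2 := by
    have h1 : ∑ α, t α = ∑ α, ((a - c) * w α + c * (d : ℝ)) :=
      Finset.sum_congr rfl (fun α _ => htw α)
    rw [hsum_t] at h1
    rw [h1, Finset.sum_add_distrib, ← Finset.mul_sum, Finset.sum_const, hcard]
    push_cast
    ring
  have hinv : ((a - c) + c * (d : ℝ) ^ 2) * (d : ℝ) = 1 := by
    have h1 : (((a - c) + c * (d : ℝ) ^ 2) * (d : ℝ)) * ((d : ℝ) ^ 2 - 1)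
        = (a - c) * ((d : ℝ) * ((d : ℝ) ^ 2 - 1))
          + (c * ((d : ℝ) * ((d : ℝ) ^ 2 - 1))) * (d : ℝ) ^ 2 := by ring
    rw [hacden, hcden] at h1
    have h2 : (((a - c) + c * (d : ℝ) ^ 2) * (d : ℝ)) * ((d : ℝ) ^ 2 - 1)
        = 1 * ((d : ℝ) ^ 2 - 1) := by rw [h1]; ring
    exact mul_right_cancel₀ (ne_of_gt hd1) h2
  have hSwd : (∑ α, w α) = (d : ℝ) := by
    have h1 : (a - c) * (∑ α, w α) = (a - c) * (d : ℝ) := by linear_combination -hsumtw - hinv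
    exact mul_left_cancel₀ (ne_of_gt hacpos) h1
  have hSwt : (∑ α, w α * t α) = (a - c) * (∑ α, w α ^ 2) + c * (d : ℝ) * (∑ α, w α) := by
    have h1 : ∀ α, w α * t α = (a - c) * w α ^ 2 + c * (d : ℝ) * w α := by
      intro α; rw [htw α]; ring
    rw [Finset.sum_congr rfl (fun α _ => h1 α), Finset.sum_add_distrib, ← Finset.mul_sum,
      ← Finset.mul_sum]
  have key1 : (a - c) * (∑ α, w α ^ 2) ≤ 1 - c * (d : ℝ) ^ 2 := by
    rw [hSwt, hSwd] at hreal
    linarith [hreal, hts1]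
  have hsumt2 : ∑ α, t α ^ 2 = ((a - c) * (a - c)) * (∑ α, w α ^ 2)
      + (2 * (a - c) * (c * (d : ℝ))) * (∑ α, w α) + (c * (d : ℝ)) ^ 2 * (d : ℝ) ^ 2 := by
    have h1 : ∀ α, t α ^ 2 = ((a - c) * (a - c)) * w α ^ 2
        + (2 * (a - c) * (c * (d : ℝ))) * w α + (c * (d : ℝ)) ^ 2 := by
      intro α; rw [htw α]; ring
    rw [Finset.sum_congr rfl (fun α _ => h1 α), Finset.sum_add_distrib, Finset.sum_add_distrib,
      ← Finset.mul_sum, ← Finset.mul_sum, Finset.sum_const, hcard, nsmul_eq_mul]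
    push_cast
    ring
  have key2 : ∑ α, t α ^ 2 ≤ (a - c) + c * (d : ℝ) := by
    have h4 : (a - c) * ((a - c) * (∑ α, w α ^ 2)) ≤ (a - c) * (1 - c * (d : ℝ) ^ 2) :=
      mul_le_mul_of_nonneg_left key1 (le_of_lt hacpos)
    have h5 : (a - c) * (1 - c * (d : ℝ) ^ 2) + 2 * (a - c) * (c * (d : ℝ)) * (d : ℝ)
        + (c * (d : ℝ)) ^ 2 * (d : ℝ) ^ 2
        = (a - c) + c * (d : ℝ) * (((a - c) + c * (d : ℝ) ^ 2) * (d : ℝ)) := by ring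
    have h6 : (a - c) * (1 - c * (d : ℝ) ^ 2) + 2 * (a - c) * (c * (d : ℝ)) * (d : ℝ)
        + (c * (d : ℝ)) ^ 2 * (d : ℝ) ^ 2 = (a - c) + c * (d : ℝ) := by
      rw [h5, hinv, mul_one]
    rw [hsumt2, hSwd]
    nlinarith [h4, h6]
  have hfinal : ((a - c) + c * (d : ℝ)) * ((d : ℝ) * ((d : ℝ) + 1)) = a * (d : ℝ) ^ 2 + 1 := by
    linear_combination hcden
  have hdd1 : (0 : ℝ) < (d : ℝ) * ((d : ℝ) + 1) := by positivity
  have hfinal2 : (a * (d : ℝ) ^ 2 + 1) / ((d : ℝ) * ((d : ℝ) + 1)) = (a - c) + c * (d : ℝ) := by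
    rw [← hfinal]
    field_simp
  have hnorm : ∀ α, ‖(Ms α * σ).trace‖ ^ 2 = t α ^ 2 := by
    intro α
    rw [htc α, Complex.norm_real, Real.norm_eq_abs, sq_abs]
  rw [Finset.sum_congr rfl (fun α _ => hnorm α), hfinal2]
  exact key2


/-- for a separable bipartite state ρ_AB and GSIC-POVMs with
parameters a_A, a_B on the two subsystems, the matrix G(ρ_AB) with entries
tr((M^A_α ⊗ M^B_β) ρ_AB) satisfies
‖G(ρ_AB)‖_tr ≤ √((a_A d_A²+1)/(d_A(d_A+1))) · √((a_B d_B²+1)/(d_B(d_B+1))). -/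
theorem separability_criterion_GSIC_correlation
    (dA dB : ℕ) (aA aB : ℝ)
    (MA : Fin (dA ^ 2) → Matrix (Fin dA) (Fin dA) ℂ)
    (MB : Fin (dB ^ 2) → Matrix (Fin dB) (Fin dB) ℂ)
    (hMA : IsGSICPOVM dA aA MA) (hMB : IsGSICPOVM dB aB MB)
    (ρ : Matrix (Fin dA × Fin dB) (Fin dA × Fin dB) ℂ)
    (hρ : IsDensityMatrix ρ) (hsep : SeparableState ρ) :
    traceNorm (Matrix.of fun (α : Fin (dA ^ 2)) (β : Fin (dB ^ 2)) =>
        ((MA α ⊗ₖ MB β) * ρ).trace) ≤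
    Real.sqrt ((aA * (dA : ℝ) ^ 2 + 1) / ((dA : ℝ) * ((dA : ℝ) + 1))) *
    Real.sqrt ((aB * (dB : ℝ) ^ 2 + 1) / ((dB : ℝ) * ((dB : ℝ) + 1))) := by
  classical
  obtain ⟨K, p, ρA, ρB, hp, hps, hDA, hDB, hρeq⟩ := hsep
  obtain ⟨C, hC⟩ : ∃ C : Matrix (Fin (dA ^ 2)) (Fin K) ℂ,
      C = Matrix.of fun α i => ((Real.sqrt (p i) : ℝ) : ℂ) * (MA α * ρA i).trace := ⟨_, rfl⟩
  obtain ⟨D, hD⟩ : ∃ D : Matrix (Fin K) (Fin (dB ^ 2)) ℂ,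
      D = Matrix.of fun i β => ((Real.sqrt (p i) : ℝ) : ℂ) * (MB β * ρB i).trace := ⟨_, rfl⟩
  have hG : (Matrix.of fun (α : Fin (dA ^ 2)) (β : Fin (dB ^ 2)) =>
      ((MA α ⊗ₖ MB β) * ρ).trace) = C * D := by
    ext α β
    rw [Matrix.mul_apply]
    simp only [Matrix.of_apply, hC, hD]
    rw [hρeq, Matrix.mul_sum, Matrix.trace_sum]
    refine Finset.sum_congr rfl fun i _ => ?_
    rw [Matrix.mul_smul, Matrix.trace_smul, smul_eq_mul, ← Matrix.mul_kronecker_mul,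
      Matrix.trace_kronecker]
    have hsq : ((Real.sqrt (p i) : ℝ) : ℂ) * ((Real.sqrt (p i) : ℝ) : ℂ) = ((p i : ℝ) : ℂ) := by
      rw [← Complex.ofReal_mul, Real.mul_self_sqrt (hp i)]
    calc ((p i : ℝ) : ℂ) * ((MA α * ρA i).trace * (MB β * ρB i).trace)
        = (((Real.sqrt (p i) : ℝ) : ℂ) * ((Real.sqrt (p i) : ℝ) : ℂ))
          * ((MA α * ρA i).trace * (MB β * ρB i).trace) := by rw [hsq]
      _ = ((Real.sqrt (p i) : ℝ) : ℂ) * (MA α * ρA i).trace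
          * (((Real.sqrt (p i) : ℝ) : ℂ) * (MB β * ρB i).trace) := by ring
  rw [hG]
  refine (traceNorm_mul_le C D).trans ?_
  have hCb : (∑ α, ∑ i, ‖C α i‖ ^ 2)
      ≤ (aA * (dA : ℝ) ^ 2 + 1) / ((dA : ℝ) * ((dA : ℝ) + 1)) := by
    rw [Finset.sum_comm]
    have h1 : ∀ i, (∑ α, ‖C α i‖ ^ 2) = p i * ∑ α, ‖(MA α * ρA i).trace‖ ^ 2 := by
      intro i
      rw [Finset.mul_sum]
      refine Finset.sum_congr rfl fun α _ => ?_
      rw [hC]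
      simp only [Matrix.of_apply]
      rw [norm_mul, mul_pow, Complex.norm_real, Real.norm_eq_abs, sq_abs,
        Real.sq_sqrt (hp i)]
    rw [Finset.sum_congr rfl fun i _ => h1 i]
    calc ∑ i, p i * ∑ α, ‖(MA α * ρA i).trace‖ ^ 2
        ≤ ∑ i, p i * ((aA * (dA : ℝ) ^ 2 + 1) / ((dA : ℝ) * ((dA : ℝ) + 1))) :=
          Finset.sum_le_sum fun i _ =>
            mul_le_mul_of_nonneg_left (gsic_sum_sq_le hMA (hDA i)) (hp i)
      _ = (aA * (dA : ℝ) ^ 2 + 1) / ((dA : ℝ) * ((dA : ℝ) + 1)) := by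
          rw [← Finset.sum_mul, hps, one_mul]
  have hDb : (∑ i, ∑ β, ‖D i β‖ ^ 2)
      ≤ (aB * (dB : ℝ) ^ 2 + 1) / ((dB : ℝ) * ((dB : ℝ) + 1)) := by
    have h1 : ∀ i, (∑ β, ‖D i β‖ ^ 2) = p i * ∑ β, ‖(MB β * ρB i).trace‖ ^ 2 := by
      intro i
      rw [Finset.mul_sum]
      refine Finset.sum_congr rfl fun β _ => ?_
      rw [hD]
      simp only [Matrix.of_apply]
      rw [norm_mul, mul_pow, Complex.norm_real, Real.norm_eq_abs, sq_abs,
        Real.sq_sqrt (hp i)]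
    rw [Finset.sum_congr rfl fun i _ => h1 i]
    calc ∑ i, p i * ∑ β, ‖(MB β * ρB i).trace‖ ^ 2
        ≤ ∑ i, p i * ((aB * (dB : ℝ) ^ 2 + 1) / ((dB : ℝ) * ((dB : ℝ) + 1))) :=
          Finset.sum_le_sum fun i _ =>
            mul_le_mul_of_nonneg_left (gsic_sum_sq_le hMB (hDB i)) (hp i)
      _ = (aB * (dB : ℝ) ^ 2 + 1) / ((dB : ℝ) * ((dB : ℝ) + 1)) := by
          rw [← Finset.sum_mul, hps, one_mul]
  exact mul_le_mul (Real.sqrt_le_sqrt hCb) (Real.sqrt_le_sqrt hDb)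
    (Real.sqrt_nonneg _) (Real.sqrt_nonneg _)
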